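/- For every integer s ≥ 2 and every n ≥ 0, one has the identity of real numbers Σ_{k=0}^{n} |T_k| = (r_+^{n+1} + r_-^{n+1} − 2) / (2(s−1)), where r_± = s·(1 ± √(1 − 1/s)). -/
import Mathlib


open Finset

/-- `T_n`: the set of strings `t : Fin n → ℤ` with all letters in
`Σ_* = {m : 1 ≤ |m| ≤ s}` such that no letter `t_j > 0` is immediately followed by
`t_{j+1} = −t_j`. -/
noncomputable def Tset (s n : ℕ) : Finset (Fin n → ℤ) :=
  letI := Classical.decPred
    (fun t : Fin n → ℤ => (∀ i, t i ≠ 0) ∧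
      ∀ (i : Fin n) (h : (i : ℕ) + 1 < n), ¬(0 < t i ∧ t ⟨(i : ℕ) + 1, h⟩ = -t i))
  (Fintype.piFinset fun _ : Fin n => Finset.Icc (-(s : ℤ)) (s : ℤ)).filter
    (fun t => (∀ i, t i ≠ 0) ∧
      ∀ (i : Fin n) (h : (i : ℕ) + 1 < n), ¬(0 < t i ∧ t ⟨(i : ℕ) + 1, h⟩ = -t i))

lemma mem_Tset {s n : ℕ} {t : Fin n → ℤ} :
    t ∈ Tset s n ↔ (∀ i, t i ∈ Finset.Icc (-(s:ℤ)) (s:ℤ)) ∧ (∀ i, t i ≠ 0) ∧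
      ∀ (i : Fin n) (h : (i : ℕ) + 1 < n), ¬(0 < t i ∧ t ⟨(i : ℕ) + 1, h⟩ = -t i) := by
  classical
  simp [Tset, Fintype.mem_piFinset, and_assoc]

lemma Tcard0 (s : ℕ) : (Tset s 0).card = 1 := by
  classical
  have : Tset s 0 = {(fun i => i.elim0)} := by
    ext t
    simp [mem_Tset]
    exact funext fun i => i.elim0
  simp [this]

lemma cardLetters (s : ℕ) (hs : 1 ≤ s) :
    (((Finset.Icc (-(s:ℤ)) (s:ℤ))).filter (· ≠ 0)).card = 2 * s := by
  rw [Finset.filter_ne', Finset.card_erase_of_mem (by simp), Int.card_Icc]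
  omega

lemma cardLetters2 (s : ℕ) (hs : 1 ≤ s) (a : ℤ) (ha : 1 ≤ a) (ha2 : a ≤ s) :
    (((Finset.Icc (-(s:ℤ)) (s:ℤ))).filter (fun z => z ≠ 0 ∧ z ≠ -a)).card = 2 * s - 1 := by
  classical
  have : (((Finset.Icc (-(s:ℤ)) (s:ℤ))).filter (fun z => z ≠ 0 ∧ z ≠ -a))
      = ((((Finset.Icc (-(s:ℤ)) (s:ℤ))).filter (· ≠ 0)).erase (-a)) := by
    rw [← Finset.filter_ne', Finset.filter_filter]
  rw [this, Finset.card_erase_of_mem, cardLetters s hs]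
  simp only [Finset.mem_filter, Finset.mem_Icc]
  refine ⟨⟨by omega, by omega⟩, by omega⟩

lemma snoc_eval {m : ℕ} (u : Fin (m+1) → ℤ) (z : ℤ) (k : ℕ) (hk : k < m+2) :
    (Fin.snoc u z : Fin (m+2) → ℤ) ⟨k, hk⟩ = if h : k < m+1 then u ⟨k, h⟩ else z := by
  split_ifs with h
  · have : (⟨k, hk⟩ : Fin (m+2)) = Fin.castSucc ⟨k, h⟩ := rfl
    rw [this, Fin.snoc_castSucc]
  · have hk' : k = m+1 := by omega
    subst hk'
    have : (⟨m+1, hk⟩ : Fin (m+2)) = Fin.last (m+1) := rfl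
    rw [this, Fin.snoc_last]

lemma snoc_mem_iff {s m : ℕ} {u : Fin (m+1) → ℤ} (hu : u ∈ Tset s (m+1)) (z : ℤ) :
    (Fin.snoc u z : Fin (m+2) → ℤ) ∈ Tset s (m+2) ↔
      z ∈ Finset.Icc (-(s:ℤ)) (s:ℤ) ∧ z ≠ 0 ∧
        ¬(0 < u (Fin.last m) ∧ z = -u (Fin.last m)) := by
  obtain ⟨hu1, hu2, hu3⟩ := mem_Tset.mp hu
  rw [mem_Tset]
  have hlast : (Fin.last m : Fin (m+1)) = ⟨m, by omega⟩ := rfl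
  constructor
  · rintro ⟨h1, h2, h3⟩
    refine ⟨?_, ?_, ?_⟩
    · have := h1 (Fin.last (m+1)); rwa [Fin.snoc_last] at this
    · have := h2 (Fin.last (m+1)); rwa [Fin.snoc_last] at this
    · rintro ⟨hp, hz⟩
      refine h3 ⟨m, by omega⟩ (by simp) ⟨?_, ?_⟩
      · rw [snoc_eval, dif_pos (by omega : m < m+1)]
        rw [hlast] at hp; exact hp
      · show (Fin.snoc u z : Fin (m+2) → ℤ) ⟨m+1, _⟩ = _
        rw [snoc_eval, dif_neg (by omega : ¬ m+1 < m+1),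
          snoc_eval, dif_pos (by omega : m < m+1)]
        rw [hlast] at hz; exact hz
  · rintro ⟨hz1, hz2, hz3⟩
    refine ⟨?_, ?_, ?_⟩
    · rintro ⟨k, hk⟩
      rw [snoc_eval]
      split_ifs with h
      · exact hu1 _
      · exact hz1
    · rintro ⟨k, hk⟩
      rw [snoc_eval]
      split_ifs with h
      · exact hu2 _
      · exact hz2
    · rintro ⟨k, hk⟩ h' ⟨hpos, heq⟩
      have h'' : k + 1 < m + 2 := h'
      rw [snoc_eval] at hpos
      have heq' : (Fin.snoc u z : Fin (m+2) → ℤ) ⟨k+1, h''⟩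
          = -(Fin.snoc u z : Fin (m+2) → ℤ) ⟨k, hk⟩ := heq
      rw [snoc_eval, snoc_eval] at heq'
      by_cases h2 : k + 1 < m + 1
      · rw [dif_pos h2] at heq'
        rw [dif_pos (by omega : k < m+1)] at hpos heq'
        exact hu3 ⟨k, by omega⟩ (by exact h2) ⟨hpos, heq'⟩
      · have hk' : k = m := by omega
        rw [dif_neg h2] at heq'
        rw [dif_pos (by omega : k < m+1)] at hpos heq'
        simp only [hk'] at hpos heq'
        exact hz3 ⟨hpos, heq'⟩

lemma restrict_mem {s m : ℕ} {t : Fin (m+2) → ℤ} (ht : t ∈ Tset s (m+2)) :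
    t ∘ Fin.castSucc ∈ Tset s (m+1) := by
  obtain ⟨h1, h2, h3⟩ := mem_Tset.mp ht
  rw [mem_Tset]
  refine ⟨fun i => h1 _, fun i => h2 _, ?_⟩
  rintro ⟨k, hk⟩ h hcon
  exact h3 ⟨k, by omega⟩ (by omega) hcon

lemma snoc_restrict {m : ℕ} (t : Fin (m+2) → ℤ) :
    Fin.snoc (t ∘ Fin.castSucc) (t (Fin.last (m+1))) = t := by
  exact Fin.snoc_init_self t

lemma card_fiber {s m : ℕ} (hs : 1 ≤ s) (u : Fin (m+1) → ℤ) (hu : u ∈ Tset s (m+1)) :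
    ((Tset s (m+2)).filter (fun t => t ∘ Fin.castSucc = u)).card
      = if 0 < u (Fin.last m) then 2*s - 1 else 2*s := by
  classical
  have hcard : ((Tset s (m+2)).filter (fun t => t ∘ Fin.castSucc = u)).card
      = ((Finset.Icc (-(s:ℤ)) (s:ℤ)).filter
          (fun z => z ≠ 0 ∧ ¬(0 < u (Fin.last m) ∧ z = -u (Fin.last m)))).card := by
    refine Finset.card_bij' (fun t _ => t (Fin.last (m+1))) (fun z _ => Fin.snoc u z)
      ?_ ?_ ?_ ?_
    · intro t ht
      rw [Finset.mem_filter] at ht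
      obtain ⟨ht1, ht2⟩ := ht
      have hts : t = Fin.snoc u (t (Fin.last (m+1))) := by
        rw [← ht2]; exact (snoc_restrict t).symm
      have := (snoc_mem_iff hu (t (Fin.last (m+1)))).mp (by rw [← hts]; exact ht1)
      simp only [Finset.mem_filter]
      exact ⟨this.1, this.2.1, this.2.2⟩
    · intro z hz
      simp only [Finset.mem_filter] at hz ⊢
      refine ⟨(snoc_mem_iff hu z).mpr ⟨hz.1, hz.2.1, hz.2.2⟩, ?_⟩
      funext i
      simp
    · intro t ht
      rw [Finset.mem_filter] at ht
      show Fin.snoc u (t (Fin.last (m+1))) = t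
      rw [← ht.2]
      exact snoc_restrict t
    · intro z hz
      show (Fin.snoc u z : Fin (m+2) → ℤ) (Fin.last (m+1)) = z
      simp
  rw [hcard]
  obtain ⟨hu1, hu2, hu3⟩ := mem_Tset.mp hu
  have hbd := Finset.mem_Icc.mp (hu1 (Fin.last m))
  split_ifs with hpos
  · have : ((Finset.Icc (-(s:ℤ)) (s:ℤ)).filter
        (fun z => z ≠ 0 ∧ ¬(0 < u (Fin.last m) ∧ z = -u (Fin.last m))))
      = ((Finset.Icc (-(s:ℤ)) (s:ℤ)).filter
        (fun z => z ≠ 0 ∧ z ≠ -u (Fin.last m))) := by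
      apply Finset.filter_congr
      intro z _
      constructor
      · rintro ⟨h1, h2⟩; exact ⟨h1, fun h => h2 ⟨hpos, h⟩⟩
      · rintro ⟨h1, h2⟩; exact ⟨h1, fun h => h2 h.2⟩
    rw [this]
    exact cardLetters2 s hs _ (by omega) hbd.2
  · have : ((Finset.Icc (-(s:ℤ)) (s:ℤ)).filter
        (fun z => z ≠ 0 ∧ ¬(0 < u (Fin.last m) ∧ z = -u (Fin.last m))))
      = ((Finset.Icc (-(s:ℤ)) (s:ℤ)).filter (· ≠ 0)) := by
      apply Finset.filter_congr
      intro z _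
      constructor
      · rintro ⟨h1, _⟩; exact h1
      · intro h1; exact ⟨h1, fun h => hpos h.1⟩
    rw [this]
    exact cardLetters s hs

lemma card_succ (s m : ℕ) (hs : 1 ≤ s) :
    (Tset s (m+2)).card
      = ∑ u ∈ Tset s (m+1), if 0 < u (Fin.last m) then 2*s - 1 else 2*s := by
  classical
  have H : ∀ x ∈ Tset s (m+2), x ∘ Fin.castSucc ∈ Tset s (m+1) := fun x hx => restrict_mem hx
  have h := Finset.card_eq_sum_card_fiberwise (f := fun t : Fin (m+2) → ℤ => t ∘ Fin.castSucc)
    (s := Tset s (m+2)) (t := Tset s (m+1)) H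
  exact h.trans (Finset.sum_congr rfl fun u hu => card_fiber hs u hu)

lemma card_fiber_pos {s m : ℕ} (u : Fin (m+1) → ℤ) (hu : u ∈ Tset s (m+1)) :
    (((Tset s (m+2)).filter (fun t => 0 < t (Fin.last (m+1)))).filter
        (fun t => t ∘ Fin.castSucc = u)).card = s := by
  classical
  have hcard : (((Tset s (m+2)).filter (fun t => 0 < t (Fin.last (m+1)))).filter
        (fun t => t ∘ Fin.castSucc = u)).card = (Finset.Icc (1:ℤ) (s:ℤ)).card := by
    refine Finset.card_bij' (fun t _ => t (Fin.last (m+1))) (fun z _ => Fin.snoc u z)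
      ?_ ?_ ?_ ?_
    · intro t ht
      simp only [Finset.mem_filter] at ht
      obtain ⟨⟨ht1, htpos⟩, ht2⟩ := ht
      have hts : t = Fin.snoc u (t (Fin.last (m+1))) := by
        rw [← ht2]; exact (snoc_restrict t).symm
      have := (snoc_mem_iff hu (t (Fin.last (m+1)))).mp (by rw [← hts]; exact ht1)
      have hb := Finset.mem_Icc.mp this.1
      rw [Finset.mem_Icc]
      exact ⟨htpos, hb.2⟩
    · intro z hz
      rw [Finset.mem_Icc] at hz
      simp only [Finset.mem_filter]
      refine ⟨⟨(snoc_mem_iff hu z).mpr ⟨by rw [Finset.mem_Icc]; omega, by omega, ?_⟩, ?_⟩, ?_⟩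
      · rintro ⟨hp, he⟩; omega
      · show 0 < (Fin.snoc u z : Fin (m+2) → ℤ) (Fin.last (m+1))
        rw [Fin.snoc_last]; omega
      · funext i; simp
    · intro t ht
      simp only [Finset.mem_filter] at ht
      show Fin.snoc u (t (Fin.last (m+1))) = t
      rw [← ht.2]
      exact snoc_restrict t
    · intro z hz
      show (Fin.snoc u z : Fin (m+2) → ℤ) (Fin.last (m+1)) = z
      simp
  rw [hcard, Int.card_Icc]
  clear hcard hu
  omega

lemma Ppos_succ (s m : ℕ) :
    ((Tset s (m+2)).filter (fun t => 0 < t (Fin.last (m+1)))).card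
      = s * (Tset s (m+1)).card := by
  classical
  have h := Finset.card_eq_sum_card_fiberwise (f := fun t : Fin (m+2) → ℤ => t ∘ Fin.castSucc)
    (s := (Tset s (m+2)).filter (fun t => 0 < t (Fin.last (m+1)))) (t := Tset s (m+1))
    (H := fun x hx => restrict_mem (Finset.mem_filter.mp hx).1)
  refine h.trans ?_
  rw [Finset.sum_congr rfl (fun u hu => card_fiber_pos u hu), Finset.sum_const,
    smul_eq_mul, mul_comm]

lemma Tset_one_mem {s : ℕ} {t : Fin 1 → ℤ} :
    t ∈ Tset s 1 ↔ t 0 ∈ Finset.Icc (-(s:ℤ)) (s:ℤ) ∧ t 0 ≠ 0 := by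
  rw [mem_Tset]
  constructor
  · rintro ⟨h1, h2, _⟩; exact ⟨h1 0, h2 0⟩
  · rintro ⟨h1, h2⟩
    refine ⟨fun i => ?_, fun i => ?_, fun i h => ?_⟩
    · have hi : i = 0 := Subsingleton.elim _ _
      rw [hi]; exact h1
    · have hi : i = 0 := Subsingleton.elim _ _
      rw [hi]; exact h2
    · exact absurd h (by omega)

lemma Tcard1 (s : ℕ) (hs : 1 ≤ s) : (Tset s 1).card = 2 * s := by
  classical
  have h : (Tset s 1).card = (((Finset.Icc (-(s:ℤ)) (s:ℤ))).filter (· ≠ 0)).card := by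
    refine Finset.card_bij' (fun t _ => t 0) (fun z _ => fun _ => z) ?_ ?_ ?_ ?_
    · intro t ht
      have := Tset_one_mem.mp ht
      simp only [Finset.mem_filter]
      exact this
    · intro z hz
      simp only [Finset.mem_filter] at hz
      exact Tset_one_mem.mpr hz
    · intro t ht
      funext i
      have hi : i = 0 := Subsingleton.elim _ _
      rw [hi]
    · intro z hz; rfl
  rw [h]; exact cardLetters s hs

lemma Ppos0 (s : ℕ) : ((Tset s 1).filter (fun t => 0 < t (Fin.last 0))).card = s := by
  classical
  have h : ((Tset s 1).filter (fun t => 0 < t (Fin.last 0))).card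
      = (Finset.Icc (1:ℤ) (s:ℤ)).card := by
    refine Finset.card_bij' (fun t _ => t 0) (fun z _ => fun _ => z) ?_ ?_ ?_ ?_
    · intro t ht
      simp only [Finset.mem_filter] at ht
      have h1 := Tset_one_mem.mp ht.1
      have hb := Finset.mem_Icc.mp h1.1
      rw [Finset.mem_Icc]
      exact ⟨ht.2, hb.2⟩
    · intro z hz
      rw [Finset.mem_Icc] at hz
      simp only [Finset.mem_filter]
      exact ⟨Tset_one_mem.mpr ⟨by rw [Finset.mem_Icc]; omega, by omega⟩, hz.1⟩
    · intro t ht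
      funext i
      have hi : i = 0 := Subsingleton.elim _ _
      rw [hi]
    · intro z hz; rfl
  rw [h, Int.card_Icc]
  simp

lemma Ppos_all (s m : ℕ) :
    ((Tset s (m+1)).filter (fun t => 0 < t (Fin.last m))).card = s * (Tset s m).card := by
  cases m with
  | zero => rw [Ppos0, Tcard0, mul_one]
  | succ k => exact Ppos_succ s k

lemma recurN (s m : ℕ) (hs : 1 ≤ s) :
    (Tset s (m+2)).card + s * (Tset s m).card = 2 * s * (Tset s (m+1)).card := by
  classical
  rw [card_succ s m hs, ← Ppos_all s m, Finset.card_filter, ← Finset.sum_add_distrib]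
  have hcong : ∀ u ∈ Tset s (m+1),
      ((if 0 < u (Fin.last m) then 2*s-1 else 2*s)
        + (if 0 < u (Fin.last m) then 1 else 0)) = 2*s := by
    intro u _
    split_ifs <;> omega
  rw [Finset.sum_congr rfl hcong, Finset.sum_const, smul_eq_mul, mul_comm]

lemma closed_form (s : ℕ) (hs : 2 ≤ s) (m : ℕ) :
    ((Tset s m).card : ℝ)
      = (((s:ℝ)*(1+Real.sqrt (1-1/(s:ℝ))))^(m+1)
          - ((s:ℝ)*(1-Real.sqrt (1-1/(s:ℝ))))^(m+1))
        / (2*(s:ℝ)*Real.sqrt (1-1/(s:ℝ))) := by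
  have hS : (2:ℝ) ≤ (s:ℝ) := by exact_mod_cast hs
  set S := (s:ℝ) with hSdef
  have hS0 : S ≠ 0 := by intro h; rw [h] at hS; linarith
  have hpos : (0:ℝ) < 1 - 1/S := by
    rw [sub_pos, div_lt_one (by linarith)]; linarith
  set x := Real.sqrt (1 - 1/S) with hxdef
  have hx2 : x^2 = 1 - 1/S := Real.sq_sqrt (le_of_lt hpos)
  have hxpos : 0 < x := Real.sqrt_pos.mpr hpos
  set p := S*(1+x) with hpdef
  set q := S*(1-x) with hqdef
  have hx2' : S*x^2 = S - 1 := by rw [hx2]; field_simp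
  have hcp : p^2 = 2*S*p - S := by rw [hpdef]; linear_combination S * hx2'
  have hcq : q^2 = 2*S*q - S := by rw [hqdef]; linear_combination S * hx2'
  have hden : 2*S*x ≠ 0 := by positivity
  have key : ∀ k : ℕ, ((Tset s k).card : ℝ) = (p^(k+1) - q^(k+1))/(2*S*x)
      ∧ ((Tset s (k+1)).card : ℝ) = (p^(k+2) - q^(k+2))/(2*S*x) := by
    intro k
    induction k with
    | zero =>
      constructor
      · rw [Tcard0]
        push_cast
        field_simp
        rw [hpdef, hqdef]
        ring
      · rw [Tcard1 s (by omega)]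
        push_cast
        rw [← hSdef]
        field_simp
        rw [hpdef, hqdef]
        ring
    | succ k ih =>
      refine ⟨ih.2, ?_⟩
      have hrec : ((Tset s (k+2)).card : ℝ)
          = 2*S*((Tset s (k+1)).card : ℝ) - S*((Tset s k).card : ℝ) := by
        have h0 := recurN s k (by omega)
        have h1 := congrArg (Nat.cast : ℕ → ℝ) h0
        push_cast at h1
        rw [← hSdef] at h1
        linarith
      rw [hrec, ih.1, ih.2]
      have hA : 2*S*((p^(k+2)-q^(k+2))/(2*S*x)) - S*((p^(k+1)-q^(k+1))/(2*S*x))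
          = (2*S*(p^(k+2)-q^(k+2)) - S*(p^(k+1)-q^(k+1)))/(2*S*x) := by ring
      rw [hA, div_eq_div_iff hden hden]
      linear_combination (2*S*x) * (q^(k+1) * hcq - p^(k+1) * hcp)
  exact (key m).1

theorem stmt_10 (s : ℕ) (hs : 2 ≤ s) (n : ℕ) :
    ∑ k ∈ Finset.range (n + 1), ((Tset s k).card : ℝ)
      = (((s : ℝ) * (1 + Real.sqrt (1 - 1 / (s : ℝ)))) ^ (n + 1)
          + ((s : ℝ) * (1 - Real.sqrt (1 - 1 / (s : ℝ)))) ^ (n + 1) - 2)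
        / (2 * ((s : ℝ) - 1)) := by
  have hS : (2:ℝ) ≤ (s:ℝ) := by exact_mod_cast hs
  set S := (s:ℝ) with hSdef
  have hS0 : S ≠ 0 := by intro h; rw [h] at hS; linarith
  have hS1 : S - 1 ≠ 0 := by intro h; nlinarith
  have hpos : (0:ℝ) < 1 - 1/S := by
    rw [sub_pos, div_lt_one (by linarith)]; linarith
  set x := Real.sqrt (1 - 1/S) with hxdef
  have hx2 : x^2 = 1 - 1/S := Real.sq_sqrt (le_of_lt hpos)
  have hxpos : 0 < x := Real.sqrt_pos.mpr hpos
  set p := S*(1+x) with hpdef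
  set q := S*(1-x) with hqdef
  have hx2' : S*x^2 = S - 1 := by rw [hx2]; field_simp
  have hden : 2*S*x ≠ 0 := by positivity
  have hden2 : 2*(S-1) ≠ 0 := by
    intro h
    apply hS1
    linarith
  induction n with
  | zero =>
    rw [Finset.sum_range_one, Tcard0]
    push_cast
    rw [eq_div_iff hden2]
    rw [hpdef, hqdef]
    ring
  | succ n ih =>
    rw [Finset.sum_range_succ, ih, closed_form s hs (n+1)]
    rw [← hSdef, ← hxdef, ← hpdef, ← hqdef]
    rw [div_add_div _ _ hden2 hden, div_eq_div_iff (by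
      intro h
      rcases mul_eq_zero.mp h with h | h
      · exact hden2 h
      · exact hden h) hden2]
    linear_combination (4*S*(S-1)*(q^(n+1) - p^(n+1))) * hx2'
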